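/- In a dual Banach space X* with separable predual, a convex subset is weak* closed if and only if it is weak* sequentially closed. Consequently, for a subalgebra A ⊆ B(H) on a separable Hilbert space H identified with a dual space, the weak* sequential closure S of a convex set C equals the weak* closure of C if and only if S is weak* sequentially closed. -/

import Mathlib

open Topology Metric Set Filter

namespace Stmt16Aux

variable {X : Type*} [NormedAddCommGroup X] [NormedSpace ℝ X]

def wball (X : Type*) [NormedAddCommGroup X] [NormedSpace ℝ X] (r : ℝ) :
    Set (WeakDual ℝ X) := WeakDual.toStrongDual ⁻¹' Metric.closedBall 0 r

theorem isCompact_wball (r : ℝ) : IsCompact (wball X r) :=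
  WeakDual.isCompact_closedBall (0 : StrongDual ℝ X) r

theorem mem_wball {f : WeakDual ℝ X} {r : ℝ} :
    f ∈ wball X r ↔ ‖WeakDual.toStrongDual f‖ ≤ r := by
  simp [wball, mem_closedBall_zero_iff]

theorem isClosed_wball (r : ℝ) : IsClosed (wball X r) :=
  WeakDual.isClosed_closedBall (0 : StrongDual ℝ X) r


theorem isClosed_inter_wball [TopologicalSpace.SeparableSpace X]
    {K : Set (WeakDual ℝ X)} (hK : IsSeqClosed K) (r : ℝ) :
    IsClosed (K ∩ wball X r) := by
  have : Nonempty X := ⟨0⟩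
  obtain ⟨u, hu⟩ := TopologicalSpace.exists_dense_seq X
  set Φ : WeakDual ℝ X → (ℕ → ℝ) := fun f n => f (u n) with hΦ
  have hΦc : Continuous Φ := continuous_pi fun n => WeakDual.eval_continuous (u n)
  have hΦi : Function.Injective Φ := by
    intro f g hfg
    have h1 : Continuous (WeakDual.toStrongDual f) := (WeakDual.toStrongDual f).continuous
    have h2 : Continuous (WeakDual.toStrongDual g) := (WeakDual.toStrongDual g).continuous
    have key : ⇑(WeakDual.toStrongDual f) = ⇑(WeakDual.toStrongDual g) := by
      apply h1.ext_on hu h2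
      rintro x ⟨n, rfl⟩
      exact congrFun hfg n
    exact (WeakDual.toStrongDual_inj f g).mp (ContinuousLinearMap.ext (congrFun key))
  -- the ball as a compact metrizable subtype
  haveI hQc : CompactSpace (wball X r) := isCompact_iff_compactSpace.mp (isCompact_wball r)
  have hemb : Topology.IsClosedEmbedding (fun q : wball X r => Φ q.1) :=
    (hΦc.comp continuous_subtype_val).isClosedEmbedding (hΦi.comp Subtype.val_injective)
  haveI : TopologicalSpace.MetrizableSpace (wball X r) := hemb.isEmbedding.metrizableSpace
  letI : MetricSpace (wball X r) := TopologicalSpace.metrizableSpaceMetric _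
  -- K ∩ ball is closed in the subtype, hence closed
  have hs : IsSeqClosed (Subtype.val ⁻¹' K : Set (wball X r)) := by
    intro x p hx hp
    exact hK hx ((continuous_subtype_val.tendsto p).comp hp)
  have hclosed : IsClosed (Subtype.val ⁻¹' K : Set (wball X r)) := hs.isClosed
  have himg : Subtype.val '' (Subtype.val ⁻¹' K : Set (wball X r)) = K ∩ wball X r := by
    rw [Subtype.image_preimage_coe, Set.inter_comm]
  rw [← himg]
  exact ((isClosed_wball r).isClosedEmbedding_subtypeVal.isClosedMap) _ hclosed


/-- the set of functionals bounded by 1 on a finite set -/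
def cset (G : Finset X) : Set (WeakDual ℝ X) := {f | ∀ x ∈ G, |f x| ≤ 1}

theorem isClosed_cset (G : Finset X) : IsClosed (cset G) := by
  have : cset G = ⋂ x ∈ G, {f : WeakDual ℝ X | |f x| ≤ 1} := by
    ext f; simp [cset]
  rw [this]
  refine isClosed_biInter fun x _ => ?_
  exact isClosed_le ((WeakDual.eval_continuous x).abs) continuous_const

theorem cset_anti {G G' : Finset X} (h : G ⊆ G') : cset G' ⊆ cset G :=
  fun f hf x hx => hf x (h hx)

/-- if `‖f‖ > c > 0` then some `x` of norm `≤ 1/c` has `|f x| > 1` -/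
theorem exists_big {f : WeakDual ℝ X} {c : ℝ} (hc : 0 < c)
    (hf : c < ‖WeakDual.toStrongDual f‖) : ∃ x : X, ‖x‖ ≤ 1 / c ∧ 1 < |f x| := by
  by_contra h
  push_neg at h
  have : ‖WeakDual.toStrongDual f‖ ≤ c := by
    refine ContinuousLinearMap.opNorm_le_bound' _ hc.le fun x hx => ?_
    have hxpos : 0 < ‖x‖ := lt_of_le_of_ne (norm_nonneg x) (Ne.symm hx)
    have hz : ‖(1 / (c * ‖x‖)) • x‖ ≤ 1 / c := by
      rw [norm_smul, Real.norm_eq_abs, abs_of_pos (by positivity)]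
      rw [div_mul_eq_mul_div, one_mul, mul_comm]
      rw [div_le_div_iff₀ (by positivity) hc]
      ring_nf
      exact le_refl _
    have hb := h _ hz
    have : |f ((1 / (c * ‖x‖)) • x)| = |f x| / (c * ‖x‖) := by
      have : f ((1 / (c * ‖x‖)) • x) = (1 / (c * ‖x‖)) * f x := by
        exact map_smul f _ x ▸ rfl
      rw [this, abs_mul, abs_of_pos (by positivity : (0:ℝ) < 1 / (c * ‖x‖))]
      field_simp
    rw [this] at hb
    have := (div_le_one (by positivity : (0:ℝ) < c * ‖x‖)).mp hb
    calc ‖(WeakDual.toStrongDual f) x‖ = |f x| := by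
          simp [WeakDual.toStrongDual_apply, Real.norm_eq_abs]
      _ ≤ c * ‖x‖ := this
  linarith

/-- the inductive step of the Krein-Smulian construction -/
theorem exists_step [TopologicalSpace.SeparableSpace X] [DecidableEq X]
    {K : Set (WeakDual ℝ X)} (hK : IsSeqClosed K)
    (n : ℕ) (G : Finset X) (hG : K ∩ wball X ((n + 1 : ℕ) : ℝ) ∩ cset G = ∅) :
    ∃ F : Finset X, (∀ x ∈ F, ‖x‖ ≤ 1 / ((n + 1 : ℕ) : ℝ)) ∧
      K ∩ wball X ((n + 2 : ℕ) : ℝ) ∩ cset (G ∪ F) = ∅ := by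
  classical
  set Q := K ∩ wball X ((n + 2 : ℕ) : ℝ) ∩ cset G with hQ
  have hQcomp : IsCompact Q := by
    refine (isCompact_wball (X := X) ((n + 2 : ℕ) : ℝ)).of_isClosed_subset ?_ ?_
    · exact ((isClosed_inter_wball hK ((n + 2 : ℕ) : ℝ)).inter (isClosed_cset G))
    · rintro f ⟨⟨_, hf⟩, _⟩; exact hf
  have hcover : Q ⊆ ⋃ i : {x : X // ‖x‖ ≤ 1 / ((n + 1 : ℕ) : ℝ)},
      {f : WeakDual ℝ X | 1 < |f i.1|} := by
    rintro f ⟨⟨hfK, hfb⟩, hfc⟩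
    have hn : ((n + 1 : ℕ) : ℝ) < ‖WeakDual.toStrongDual f‖ := by
      by_contra h
      push_neg at h
      have : f ∈ K ∩ wball X ((n + 1 : ℕ) : ℝ) ∩ cset G := ⟨⟨hfK, mem_wball.mpr h⟩, hfc⟩
      rw [hG] at this
      exact this
    obtain ⟨x, hx1, hx2⟩ := exists_big (by positivity) hn
    exact Set.mem_iUnion.mpr ⟨⟨x, hx1⟩, hx2⟩
  obtain ⟨t, ht⟩ := hQcomp.elim_finite_subcover _
    (fun i : {x : X // ‖x‖ ≤ 1 / ((n + 1 : ℕ) : ℝ)} =>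
      isOpen_lt continuous_const (WeakDual.eval_continuous i.1).abs) hcover
  refine ⟨t.image Subtype.val, ?_, ?_⟩
  · intro x hx
    obtain ⟨i, _, rfl⟩ := Finset.mem_image.mp hx
    exact i.2
  · ext f
    simp only [Set.mem_empty_iff_false, iff_false]
    rintro ⟨⟨hfK, hfb⟩, hfc⟩
    have hfQ : f ∈ Q := ⟨⟨hfK, hfb⟩, cset_anti Finset.subset_union_left hfc⟩
    obtain ⟨i, hit, hfi⟩ := Set.mem_iUnion₂.mp (ht hfQ)
    have : |f i.1| ≤ 1 := hfc i.1 (Finset.mem_union_right _ (Finset.mem_image_of_mem _ hit))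
    simp only [Set.mem_setOf_eq] at hfi
    linarith


section c0
variable {ι : Type*} [TopologicalSpace ι] [DiscreteTopology ι]

/-- build an element of `C₀(ι, ℝ)` over a discrete index from a finiteness condition -/
noncomputable def mk0 (g : ι → ℝ) (hg : ∀ ε > 0, {i | ε ≤ |g i|}.Finite) :
    ZeroAtInftyContinuousMap ι ℝ where
  toFun := g
  continuous_toFun := continuous_of_discreteTopology
  zero_at_infty' := by
    rw [cocompact_eq_cofinite, Metric.tendsto_nhds]
    intro ε hε
    rw [Filter.eventually_cofinite]
    refine (hg ε hε).subset ?_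
    intro i hi
    simp only [not_lt, Real.dist_eq, sub_zero, mem_setOf_eq] at hi ⊢
    exact hi

@[simp] lemma mk0_apply (g : ι → ℝ) (hg) (i : ι) : mk0 g hg i = g i := rfl

omit [DiscreteTopology ι] in
lemma c0_abs_apply_le (g : ZeroAtInftyContinuousMap ι ℝ) (i : ι) : |g i| ≤ ‖g‖ := by
  have := BoundedContinuousFunction.norm_coe_le_norm g.toBCF i
  rwa [ZeroAtInftyContinuousMap.norm_toBCF_eq_norm] at this

omit [DiscreteTopology ι] in
lemma c0_norm_le (g : ZeroAtInftyContinuousMap ι ℝ) {C : ℝ} (hC : 0 ≤ C)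
    (h : ∀ i, |g i| ≤ C) : ‖g‖ ≤ C := by
  rw [← ZeroAtInftyContinuousMap.norm_toBCF_eq_norm]
  exact (BoundedContinuousFunction.norm_le hC).mpr h

lemma c0_finite (g : ZeroAtInftyContinuousMap ι ℝ) {ε : ℝ} (hε : 0 < ε) :
    {i | ε ≤ |g i|}.Finite := by
  have h0 := g.zero_at_infty'
  rw [cocompact_eq_cofinite, Metric.tendsto_nhds] at h0
  have h1 := h0 ε hε
  rw [Filter.eventually_cofinite] at h1
  refine h1.subset ?_
  intro i hi
  simp only [mem_setOf_eq] at hi ⊢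
  intro h
  rw [Real.dist_eq, sub_zero] at h
  have : (g.toFun i : ℝ) = g i := rfl
  rw [this] at h
  linarith

open Classical in
/-- the indicator of a single point -/
noncomputable def sgl (i : ι) : ZeroAtInftyContinuousMap ι ℝ :=
  mk0 (fun j => if j = i then 1 else 0) (by
    intro ε hε
    refine (Set.finite_singleton i).subset ?_
    intro j hj
    simp only [mem_setOf_eq] at hj
    by_contra h
    simp only [mem_singleton_iff] at h
    rw [if_neg h] at hj
    simp at hj
    linarith)

lemma sgl_apply_self (i : ι) : sgl i i = 1 := by simp [sgl]

lemma sgl_apply_ne {i j : ι} (h : j ≠ i) : sgl i j = 0 := by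
  classical
  have : sgl i j = if j = i then (1:ℝ) else 0 := rfl
  rw [this, if_neg h]

open Classical in
lemma smul_sgl_apply (a : ℝ) (i j : ι) : (a • sgl i) j = if i = j then a else 0 := by
  classical
  have h1 : (a • sgl i) j = a * sgl i j := rfl
  rw [h1]
  by_cases h : j = i
  · subst h; rw [sgl_apply_self, if_pos rfl, mul_one]
  · rw [sgl_apply_ne h, if_neg (fun q => h q.symm), mul_zero]

omit [DiscreteTopology ι] in
/-- finite sums evaluate pointwise -/
lemma c0_sum_apply (t : Finset ι) (g : ι → ZeroAtInftyContinuousMap ι ℝ) (j : ι) :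
    (∑ i ∈ t, g i) j = ∑ i ∈ t, g i j := by
  classical
  induction t using Finset.induction with
  | empty => simp
  | insert hi ih => simp_all

open Classical in
lemma sum_smul_sgl (c : ι → ℝ) (t : Finset ι) (j : ι) :
    (∑ i ∈ t, c i • sgl i) j = if j ∈ t then c j else 0 := by
  classical
  rw [c0_sum_apply, Finset.sum_congr rfl (fun i _ => smul_sgl_apply (c i) i j),
    Finset.sum_ite_eq' t j c]

/-- partial sums of single-point bumps of `g` converge to `g` -/
lemma c0_hasSum (g : ZeroAtInftyContinuousMap ι ℝ) :
    HasSum (fun i => g i • sgl i) g := by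
  classical
  rw [HasSum, Metric.tendsto_nhds]
  intro ε hε
  have hfin := c0_finite g (half_pos hε)
  rw [show (SummationFilter.unconditional ι).filter = atTop from rfl, Filter.eventually_atTop]
  refine ⟨hfin.toFinset, fun t ht => ?_⟩
  rw [dist_eq_norm]
  have hle : ‖(∑ i ∈ t, g i • sgl i) - g‖ ≤ ε / 2 := by
    refine c0_norm_le _ (by linarith) fun j => ?_
    have happ : ((∑ i ∈ t, g i • sgl i) - g) j = (∑ i ∈ t, g i • sgl i) j - g j := rfl
    rw [happ, sum_smul_sgl]
    by_cases hj : j ∈ t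
    · rw [if_pos hj]; simp; linarith
    · rw [if_neg hj]
      have hns : ¬ ε / 2 ≤ |g j| := fun h => hj (ht (hfin.mem_toFinset.mpr h))
      simp only [zero_sub, abs_neg]
      linarith [not_le.mp hns]
  linarith

/-- the coefficients of a continuous functional on `C₀(ι, ℝ)` are absolutely summable -/
lemma summable_coeff (φ : ZeroAtInftyContinuousMap ι ℝ →L[ℝ] ℝ) :
    Summable fun i => |φ (sgl i)| := by
  classical
  refine summable_of_sum_le (c := ‖φ‖) (fun i => abs_nonneg _) fun t => ?_
  set u : ι → ℝ := fun i => if 0 ≤ φ (sgl i) then 1 else -1 with hu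
  have key : ∑ i ∈ t, |φ (sgl i)| = φ (∑ i ∈ t, u i • sgl i) := by
    rw [map_sum]
    refine Finset.sum_congr rfl fun i _ => ?_
    rw [map_smul]
    simp only [smul_eq_mul, hu]
    by_cases h : 0 ≤ φ (sgl i)
    · rw [if_pos h, one_mul, abs_of_nonneg h]
    · rw [if_neg h, neg_one_mul, abs_of_neg (not_le.mp h)]
  rw [key]
  calc φ (∑ i ∈ t, u i • sgl i) ≤ ‖φ (∑ i ∈ t, u i • sgl i)‖ := le_abs_self _
    _ ≤ ‖φ‖ * ‖∑ i ∈ t, u i • sgl i‖ := φ.le_opNorm _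
    _ ≤ ‖φ‖ * 1 := by
        refine mul_le_mul_of_nonneg_left ?_ (norm_nonneg φ)
        refine c0_norm_le _ zero_le_one fun j => ?_
        rw [sum_smul_sgl]
        by_cases hj : j ∈ t
        · rw [if_pos hj]
          simp only [hu]
          by_cases h : 0 ≤ φ (sgl j) <;> simp [h]
        · rw [if_neg hj]; simp
    _ = ‖φ‖ := mul_one _

end c0


/-- dependent-choice style chain construction -/
theorem exists_chain {α : Type*} (P : ℕ → α → Prop) (R : ℕ → α → α → Prop) (a0 : α)
    (h0 : P 0 a0) (hstep : ∀ n a, P n a → ∃ b, P (n + 1) b ∧ R n a b) :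
    ∃ c : ℕ → α, (∀ n, P n (c n)) ∧ ∀ n, R n (c n) (c (n + 1)) := by
  classical
  let f : ∀ n : ℕ, { a : α // P n a } := fun n =>
    Nat.rec ⟨a0, h0⟩ (fun n ih => ⟨(hstep n ih.1 ih.2).choose, (hstep n ih.1 ih.2).choose_spec.1⟩) n
  refine ⟨fun n => (f n).1, fun n => (f n).2, fun n => ?_⟩
  exact (hstep n (f n).1 (f n).2).choose_spec.2



theorem zero_notMem_closure {X : Type*} [NormedAddCommGroup X] [NormedSpace ℝ X]
    [TopologicalSpace.SeparableSpace X] [CompleteSpace X]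
    {K : Set (WeakDual ℝ X)} (hconv : Convex ℝ K) (hK : IsSeqClosed K)
    (hfar : ∀ f ∈ K, 2 ≤ ‖WeakDual.toStrongDual f‖) :
    (0 : WeakDual ℝ X) ∉ closure K := by
  classical
  -- the chain of finite sets
  have hbase : (∀ x ∈ (∅ : Finset X), ‖x‖ ≤ 1) ∧
      K ∩ wball X ((0 + 1 : ℕ) : ℝ) ∩ cset (∅ : Finset X) = ∅ := by
    refine ⟨by simp, ?_⟩
    ext f
    simp only [Set.mem_empty_iff_false, iff_false]
    rintro ⟨⟨hfK, hfb⟩, -⟩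
    have h2 := hfar f hfK
    have h1 := mem_wball.mp hfb
    have h3 : ((0 + 1 : ℕ) : ℝ) = 1 := by norm_num
    rw [h3] at h1
    linarith
  have hstep : ∀ (n : ℕ) (G : Finset X),
      ((∀ x ∈ G, ‖x‖ ≤ 1) ∧ K ∩ wball X ((n + 1 : ℕ) : ℝ) ∩ cset G = ∅) →
      ∃ G' : Finset X,
        ((∀ x ∈ G', ‖x‖ ≤ 1) ∧ K ∩ wball X ((n + 1 + 1 : ℕ) : ℝ) ∩ cset G' = ∅) ∧
        (G ⊆ G' ∧ ∀ x ∈ G', x ∉ G → ‖x‖ ≤ 1 / ((n + 1 : ℕ) : ℝ)) := by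
    intro n G hG
    obtain ⟨F, hF1, hF2⟩ := exists_step hK n G hG.2
    refine ⟨G ∪ F, ⟨?_, hF2⟩, Finset.subset_union_left, ?_⟩
    · intro x hx
      rcases Finset.mem_union.mp hx with h | h
      · exact hG.1 x h
      · refine (hF1 x h).trans ?_
        rw [div_le_one (by positivity)]
        exact_mod_cast Nat.one_le_iff_ne_zero.mpr (Nat.succ_ne_zero n)
    · intro x hx hxG
      rcases Finset.mem_union.mp hx with h | h
      · exact absurd h hxG
      · exact hF1 x h
  obtain ⟨c, hc1, hc2⟩ := exists_chain
    (fun n G => (∀ x ∈ G, ‖x‖ ≤ 1) ∧ K ∩ wball X ((n + 1 : ℕ) : ℝ) ∩ cset G = ∅)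
    (fun n G G' => G ⊆ G' ∧ ∀ x ∈ G', x ∉ G → ‖x‖ ≤ 1 / ((n + 1 : ℕ) : ℝ))
    ∅ hbase hstep
  -- monotonicity and smallness
  have cmono : ∀ {m n : ℕ}, m ≤ n → (c m : Finset X) ⊆ c n := by
    intro m n h
    induction h with
    | refl => exact Finset.Subset.refl _
    | step _ ih => exact ih.trans (hc2 _).1
  have hsmall : ∀ n m (x : X), x ∈ c m → x ∉ c n → ‖x‖ ≤ 1 / ((n + 1 : ℕ) : ℝ) := by
    intro n m
    induction m with
    | zero => exact fun x hx hnx => absurd (cmono (Nat.zero_le n) hx) hnx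
    | succ m ih =>
      intro x hx hnx
      by_cases hm : x ∈ c m
      · exact ih x hm hnx
      · have hxnorm := (hc2 m).2 x hx hm
        by_cases hmn : m + 1 ≤ n
        · exact absurd (cmono hmn hx) hnx
        · have hnm : n ≤ m := by omega
          refine hxnorm.trans ?_
          refine one_div_le_one_div_of_le (by positivity) ?_
          exact_mod_cast Nat.succ_le_succ hnm
  -- the countable index set
  set U : Set X := ⋃ n, ((c n : Finset X) : Set X) with hU
  letI : TopologicalSpace ↥U := ⊥
  haveI : DiscreteTopology ↥U := ⟨rfl⟩
  have hUnorm : ∀ x ∈ U, ‖x‖ ≤ 1 := by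
    intro x hx
    obtain ⟨n, hn⟩ := Set.mem_iUnion.mp hx
    exact (hc1 n).1 x hn
  have hfinU : ∀ (f : WeakDual ℝ X), ∀ ε > 0, {i : ↥U | ε ≤ |f i.1|}.Finite := by
    intro f ε hε
    obtain ⟨n, hn⟩ := exists_nat_gt (‖WeakDual.toStrongDual f‖ / ε)
    refine (Set.Finite.preimage Subtype.val_injective.injOn (c n).finite_toSet).subset ?_
    intro i hi
    simp only [Set.mem_setOf_eq] at hi
    by_contra hni
    obtain ⟨m, hm⟩ := Set.mem_iUnion.mp i.2
    have hxn := hsmall n m i.1 hm hni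
    have hfx : |f i.1| ≤ ‖WeakDual.toStrongDual f‖ * ‖(i.1 : X)‖ := by
      have h := (WeakDual.toStrongDual f).le_opNorm i.1
      rwa [WeakDual.toStrongDual_apply, Real.norm_eq_abs] at h
    set M := ‖WeakDual.toStrongDual f‖ with hM
    have hM0 : 0 ≤ M := norm_nonneg _
    have h1 : M < ε * ((n + 1 : ℕ) : ℝ) := by
      rw [div_lt_iff₀ hε] at hn
      have : (n : ℝ) ≤ ((n + 1 : ℕ) : ℝ) := by exact_mod_cast Nat.le_succ n
      nlinarith
    have h2 : |f i.1| ≤ M * (1 / ((n + 1 : ℕ) : ℝ)) :=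
      hfx.trans (mul_le_mul_of_nonneg_left hxn hM0)
    have h3 : M * (1 / ((n + 1 : ℕ) : ℝ)) < ε := by
      rw [mul_one_div, div_lt_iff₀ (by positivity)]
      linarith
    linarith
  -- the map into c₀
  set T : WeakDual ℝ X → ZeroAtInftyContinuousMap ↥U ℝ :=
    fun f => mk0 (fun i : ↥U => f i.1) (hfinU f) with hT
  have hTapp : ∀ (f : WeakDual ℝ X) (i : ↥U), T f i = f i.1 := fun f i => rfl
  have hTK : ∀ f ∈ K, ∃ i : ↥U, 1 < |f i.1| := by
    intro f hf
    obtain ⟨n, hn⟩ := exists_nat_ge ‖WeakDual.toStrongDual f‖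
    have hne : f ∉ cset (c n) := by
      intro hcf
      have hmem : f ∈ K ∩ wball X ((n + 1 : ℕ) : ℝ) ∩ cset (c n) := by
        refine ⟨⟨hf, mem_wball.mpr (hn.trans ?_)⟩, hcf⟩
        exact_mod_cast Nat.le_succ n
      rw [(hc1 n).2] at hmem
      exact hmem
    simp only [cset, Set.mem_setOf_eq, not_forall] at hne
    obtain ⟨x, hx, h1⟩ := hne
    exact ⟨⟨x, Set.mem_iUnion.mpr ⟨n, hx⟩⟩, not_le.mp h1⟩
  -- separation
  have hdisj : Disjoint (Metric.ball (0 : ZeroAtInftyContinuousMap ↥U ℝ) 1) (T '' K) := by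
    rw [Set.disjoint_left]
    rintro g hg ⟨f, hf, rfl⟩
    obtain ⟨i, hi⟩ := hTK f hf
    have := c0_abs_apply_le (T f) i
    rw [hTapp] at this
    rw [mem_ball_zero_iff] at hg
    linarith
  have hconvS : Convex ℝ (T '' K) := by
    rintro g1 ⟨f1, hf1, rfl⟩ g2 ⟨f2, hf2, rfl⟩ p q hp hq hpq
    refine ⟨p • f1 + q • f2, hconv hf1 hf2 hp hq hpq, ?_⟩
    ext i
    show T (p • f1 + q • f2) i = (p • T f1 + q • T f2) i
    rw [hTapp]
    show (p • f1 + q • f2) i.1 = p • T f1 i + q • T f2 i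
    rw [hTapp, hTapp]
    rfl
  obtain ⟨φ, u, hφ1, hφ2⟩ :=
    geometric_hahn_banach_open (convex_ball (0 : ZeroAtInftyContinuousMap ↥U ℝ) 1)
      Metric.isOpen_ball hconvS hdisj
  have hu : 0 < u := by
    have := hφ1 0 (Metric.mem_ball_self one_pos)
    simpa using this
  -- the separating vector in X
  set a : ↥U → ℝ := fun i => φ (sgl i) with ha
  have hsuma : Summable fun i => |a i| := summable_coeff φ
  have hsummx : Summable fun i : ↥U => a i • (i.1 : X) := by
    refine Summable.of_norm_bounded hsuma fun i => ?_
    rw [norm_smul, Real.norm_eq_abs]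
    calc |a i| * ‖(i.1 : X)‖ ≤ |a i| * 1 :=
          mul_le_mul_of_nonneg_left (hUnorm i.1 i.2) (abs_nonneg _)
      _ = |a i| := mul_one _
  set x₀ : X := ∑' i : ↥U, a i • (i.1 : X) with hx₀
  have hxsum : HasSum (fun i : ↥U => a i • (i.1 : X)) x₀ := hsummx.hasSum
  -- for every f ∈ K, u ≤ f x₀
  have hkey : ∀ f ∈ K, u ≤ f x₀ := by
    intro f hf
    have h1 : HasSum (fun i : ↥U => a i * f i.1) (WeakDual.toStrongDual f x₀) := by
      have := hxsum.mapL (WeakDual.toStrongDual f)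
      simpa only [map_smul, smul_eq_mul, WeakDual.toStrongDual_apply] using this
    have h2 : HasSum (fun i : ↥U => a i * f i.1) (φ (T f)) := by
      have h3 := (c0_hasSum (T f)).mapL φ
      have h4 : ∀ i : ↥U, φ (T f i • sgl i) = a i * f i.1 := by
        intro i
        rw [map_smul, smul_eq_mul, hTapp, mul_comm]
      simpa only [h4] using h3
    have heq : φ (T f) = WeakDual.toStrongDual f x₀ := h2.unique h1
    have := hφ2 (T f) ⟨f, hf, rfl⟩
    rw [heq, WeakDual.toStrongDual_apply] at this
    exact this
  -- conclusion
  intro h0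
  have hV : {f : WeakDual ℝ X | f x₀ < u} ∈ 𝓝 (0 : WeakDual ℝ X) := by
    refine IsOpen.mem_nhds (isOpen_lt (WeakDual.eval_continuous x₀) continuous_const) ?_
    show (0 : WeakDual ℝ X) x₀ < u
    exact hu
  obtain ⟨f, hfV, hfK⟩ := mem_closure_iff_nhds.mp h0 _ hV
  exact absurd (hkey f hfK) (not_le.mpr hfV)


/-- a weak* sequentially closed set has norm-closed image in the dual -/
theorem isClosed_image_toNormedDual {K : Set (WeakDual ℝ X)} (hK : IsSeqClosed K) :
    IsClosed (WeakDual.toStrongDual '' K) := by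
  refine IsSeqClosed.isClosed ?_
  intro x p hx hp
  have hcont : Continuous (StrongDual.toWeakDual : StrongDual ℝ X → WeakDual ℝ X) :=
    NormedSpace.Dual.continuousLinearMapToWeakDual.continuous
  have htd : Tendsto (fun n => StrongDual.toWeakDual (x n)) atTop
      (𝓝 (StrongDual.toWeakDual p)) := (hcont.tendsto p).comp hp
  have hmem : ∀ n, StrongDual.toWeakDual (x n) ∈ K := by
    intro n
    obtain ⟨f, hf, hfx⟩ := hx n
    rw [← hfx]
    simpa using hf
  have := hK hmem htd
  exact ⟨_, this, rfl⟩

/-- Banach / Krein-Smulian : a convex weak* sequentially closed set is weak* closed -/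
theorem isClosed_of_convex_of_isSeqClosed [TopologicalSpace.SeparableSpace X] [CompleteSpace X]
    {K : Set (WeakDual ℝ X)} (hconv : Convex ℝ K) (hK : IsSeqClosed K) : IsClosed K := by
  rcases K.eq_empty_or_nonempty with rfl | hne
  · exact isClosed_empty
  rw [← closure_subset_iff_isClosed]
  intro f₀ hf₀
  by_contra hf₀K
  set N := WeakDual.toStrongDual '' K with hN
  have hNclosed : IsClosed N := isClosed_image_toNormedDual hK
  have hNne : N.Nonempty := hne.image _
  have hf₀N : WeakDual.toStrongDual f₀ ∉ N := by
    rintro ⟨f, hf, hfx⟩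
    exact hf₀K ((WeakDual.toStrongDual_inj f f₀).mp hfx ▸ hf)
  set d := Metric.infDist (WeakDual.toStrongDual f₀) N with hd
  have hdpos : 0 < d := (hNclosed.notMem_iff_infDist_pos hNne).mp hf₀N
  set ψ : WeakDual ℝ X → WeakDual ℝ X := fun f => (2 / d) • (f + -f₀) with hψ
  set ρ : WeakDual ℝ X → WeakDual ℝ X := fun g => f₀ + (d / 2) • g with hρ
  have hψc : Continuous ψ := by fun_prop
  have hρc : Continuous ρ := by fun_prop
  have hρψ : ∀ f, ρ (ψ f) = f := by
    intro f
    show f₀ + (d / 2) • ((2 / d) • (f + -f₀)) = f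
    rw [smul_smul]
    have : d / 2 * (2 / d) = 1 := by field_simp
    rw [this, one_smul]
    abel
  have hψρ : ∀ g, ψ (ρ g) = g := by
    intro g
    show (2 / d) • (f₀ + (d / 2) • g + -f₀) = g
    have h1 : f₀ + (d / 2) • g + -f₀ = (d / 2) • g := by abel
    rw [h1, smul_smul]
    have : 2 / d * (d / 2) = 1 := by field_simp
    rw [this, one_smul]
  set K₁ := ψ '' K with hK₁
  have hconv₁ : Convex ℝ K₁ := by
    rintro g1 ⟨f1, hf1, rfl⟩ g2 ⟨f2, hf2, rfl⟩ s t hs ht hst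
    refine ⟨s • f1 + t • f2, hconv hf1 hf2 hs ht hst, ?_⟩
    show (2 / d) • (s • f1 + t • f2 + -f₀) = s • (2 / d) • (f1 + -f₀) + t • (2 / d) • (f2 + -f₀)
    have hf0 : (-f₀ : WeakDual ℝ X) = -(s • f₀) + -(t • f₀) := by
      rw [← neg_add, ← add_smul, hst, one_smul]
    have h2 : s • f1 + t • f2 + -f₀ = s • (f1 + -f₀) + t • (f2 + -f₀) := by
      rw [smul_add, smul_add, smul_neg, smul_neg, hf0]
      abel
    rw [h2, smul_add, smul_comm, smul_comm (2/d) t]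
  have hseq₁ : IsSeqClosed K₁ := by
    intro x p hx hp
    have hmem : ∀ n, ρ (x n) ∈ K := by
      intro n
      obtain ⟨f, hf, hfx⟩ := hx n
      rw [← hfx, hρψ]
      exact hf
    have htd : Tendsto (fun n => ρ (x n)) atTop (𝓝 (ρ p)) := (hρc.tendsto p).comp hp
    have := hK hmem htd
    exact ⟨ρ p, this, hψρ p⟩
  have hfar₁ : ∀ g ∈ K₁, 2 ≤ ‖WeakDual.toStrongDual g‖ := by
    rintro g ⟨f, hf, rfl⟩
    have hdist : d ≤ ‖WeakDual.toStrongDual f + -(WeakDual.toStrongDual f₀)‖ := by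
      have h1 := Metric.infDist_le_dist_of_mem (x := WeakDual.toStrongDual f₀) (Set.mem_image_of_mem (WeakDual.toStrongDual (𝕜 := ℝ) (E := X)) hf)
      rw [dist_eq_norm, norm_sub_rev, sub_eq_add_neg] at h1
      exact h1
    have hmap : WeakDual.toStrongDual (ψ f) =
        (2 / d) • (WeakDual.toStrongDual f + -(WeakDual.toStrongDual f₀)) := by
      show WeakDual.toStrongDual ((2 / d) • (f + -f₀)) = _
      rw [map_smul, map_add, map_neg]
    rw [hmap, norm_smul, Real.norm_eq_abs, abs_of_pos (by positivity)]
    calc (2 : ℝ) = 2 / d * d := by field_simp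
      _ ≤ 2 / d * ‖WeakDual.toStrongDual f + -(WeakDual.toStrongDual f₀)‖ :=
          mul_le_mul_of_nonneg_left hdist (by positivity)
  have h0 : (0 : WeakDual ℝ X) ∈ closure K₁ := by
    have h1 : ψ f₀ ∈ ψ '' closure K := Set.mem_image_of_mem ψ hf₀
    have h2 : ψ '' closure K ⊆ closure K₁ := by
      rw [hK₁]
      exact image_closure_subset_closure_image hψc
    have h3 : ψ f₀ = 0 := by
      show (2 / d) • (f₀ + -f₀) = 0
      rw [add_neg_cancel, smul_zero]
    rw [← h3]
    exact h2 h1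
  exact zero_notMem_closure hconv₁ hseq₁ hfar₁ h0


theorem convex_seqClosure {C : Set (WeakDual ℝ X)} (hC : Convex ℝ C) :
    Convex ℝ (seqClosure C) := by
  rintro p ⟨xp, hxp, hxp'⟩ q ⟨xq, hxq, hxq'⟩ s t hs ht hst
  refine ⟨fun n => s • xp n + t • xq n, fun n => hC (hxp n) (hxq n) hs ht hst, ?_⟩
  exact (hxp'.const_smul s).add (hxq'.const_smul t)


end Stmt16Aux

open Stmt16Aux in
/-- in the dual of a separable Banach space, a convex set is weak* closed
iff it is weak* sequentially closed; consequently, the weak* sequential closure `S` of a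
convex set `C` equals the weak* closure of `C` iff `S` is weak* sequentially closed. -/
theorem stmt16 (X : Type*) [NormedAddCommGroup X] [NormedSpace ℝ X]
    [CompleteSpace X] [TopologicalSpace.SeparableSpace X] :
    (∀ K : Set (WeakDual ℝ X), Convex ℝ K → (IsClosed K ↔ IsSeqClosed K)) ∧
    (∀ C : Set (WeakDual ℝ X), Convex ℝ C →
      (seqClosure C = closure C ↔ IsSeqClosed (seqClosure C))) := by
  have part1 : ∀ K : Set (WeakDual ℝ X), Convex ℝ K → (IsClosed K ↔ IsSeqClosed K) :=
    fun K hK => ⟨fun h => h.isSeqClosed, fun h => isClosed_of_convex_of_isSeqClosed hK h⟩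
  refine ⟨part1, fun C hC => ⟨fun h => ?_, fun h => ?_⟩⟩
  · rw [h]
    exact isClosed_closure.isSeqClosed
  · have hconvS : Convex ℝ (seqClosure C) := convex_seqClosure hC
    have hclosed : IsClosed (seqClosure C) := (part1 _ hconvS).mpr h
    exact subset_antisymm seqClosure_subset_closure
      (closure_minimal subset_seqClosure hclosed)
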